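/- For every x ∈ [−1/2, 1/2], the function ψ satisfies 1 ≤ ψ(x) ≤ 2·ln 2; equivalently, 2x² ≤ D(1/2 + x ‖ 1/2) ≤ 4·ln(2)·x² for all x ∈ [−1/2, 1/2]. Moreover ψ is even, decreasing on [−1/2, 0], increasing on [0, 1/2], attains its minimum value ψ(0) = 1 and its maximum value ψ(1/2) = ψ(−1/2) = 2·ln 2. -/

import Mathlib

open Real Set

/-- Kullback–Leibler divergence between `Bernoulli(p)` and `Bernoulli(q)`
(with the convention `0 · ln 0 = 0`, since `Real.log 0 = 0`, this agrees with
the extension by continuity to `p ∈ {0,1}`). -/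
noncomputable def bernKL (p q : ℝ) : ℝ :=
  p * Real.log (p / q) + (1 - p) * Real.log ((1 - p) / (1 - q))

/-- `ψ(x) = D(1/2 + x ‖ 1/2)/(2x²)` for `x ≠ 0`, and `ψ(0) = 1`. -/
noncomputable def psiFn (x : ℝ) : ℝ :=
  if x = 0 then 1 else bernKL (1 / 2 + x) (1 / 2) / (2 * x ^ 2)

noncomputable def phiFn (t : ℝ) : ℝ :=
  (1 + t) * Real.log (1 + t) + (1 - t) * Real.log (1 - t)

noncomputable def LFn (t : ℝ) : ℝ := Real.log (1 + t) - Real.log (1 - t)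

noncomputable def hFn (t : ℝ) : ℝ := phiFn t / t ^ 2

lemma bernKL_eq (x : ℝ) : bernKL (1/2 + x) (1/2) = phiFn (2*x) / 2 := by
  unfold bernKL phiFn
  have h1 : (1/2 + x) / (1/2 : ℝ) = 1 + 2*x := by ring
  have h2 : (1 - (1/2 + x)) / (1 - 1/2 : ℝ) = 1 - 2*x := by ring
  rw [h1, h2]
  ring

lemma phiFn_continuous : Continuous phiFn := by
  have h := Real.continuous_mul_log
  exact (h.comp (continuous_const.add continuous_id)).add
    (h.comp (continuous_const.sub continuous_id))

lemma hasDerivAt_LFn {t : ℝ} (h1 : -1 < t) (h2 : t < 1) :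
    HasDerivAt LFn (1/(1+t) + 1/(1-t)) t := by
  have hp : (0:ℝ) < 1 + t := by linarith
  have hq : (0:ℝ) < 1 - t := by linarith
  have d1 : HasDerivAt (fun t : ℝ => Real.log (1+t)) (1/(1+t)) t := by
    simpa using ((hasDerivAt_id t).const_add 1).log hp.ne'
  have d2 : HasDerivAt (fun t : ℝ => Real.log (1-t)) (-1/(1-t)) t := by
    simpa using ((hasDerivAt_id t).const_sub 1).log hq.ne'
  have := d1.sub d2
  refine this.congr_deriv ?_
  ring

lemma hasDerivAt_phiFn {t : ℝ} (h1 : -1 < t) (h2 : t < 1) :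
    HasDerivAt phiFn (LFn t) t := by
  have hp : (0:ℝ) < 1 + t := by linarith
  have hq : (0:ℝ) < 1 - t := by linarith
  have hi1 : HasDerivAt (fun t : ℝ => 1 + t) 1 t := (hasDerivAt_id t).const_add 1
  have hi2 : HasDerivAt (fun t : ℝ => 1 - t) (-1) t := by
    simpa using (hasDerivAt_id t).const_sub 1
  have d1 : HasDerivAt (fun t : ℝ => (1+t) * Real.log (1+t))
      (1 * Real.log (1+t) + (1+t) * (1/(1+t))) t :=
    hi1.mul (by simpa using hi1.log hp.ne')
  have d2 : HasDerivAt (fun t : ℝ => (1-t) * Real.log (1-t))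
      ((-1) * Real.log (1-t) + (1-t) * (-1/(1-t))) t :=
    hi2.mul (by simpa using hi2.log hq.ne')
  have := d1.add d2
  refine this.congr_deriv ?_
  unfold LFn
  field_simp
  ring

lemma nonneg_aux (f f' : ℝ → ℝ)
    (hd : ∀ t ∈ Ioo (-1:ℝ) 1, HasDerivAt f (f' t) t)
    (h0 : f 0 = 0)
    (h'' : ∀ t ∈ Ioo (0:ℝ) 1, 0 ≤ f' t) :
    ∀ t ∈ Ico (0:ℝ) 1, 0 ≤ f t := by
  intro t ht
  rcases eq_or_lt_of_le ht.1 with h | h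
  · simp [← h, h0]
  · have hmono : MonotoneOn f (Icc 0 t) := by
      apply monotoneOn_of_deriv_nonneg (convex_Icc 0 t)
      · intro s hs
        exact (hd s ⟨by linarith [hs.1], by linarith [hs.2, ht.2]⟩).continuousAt.continuousWithinAt
      · intro s hs
        rw [interior_Icc] at hs
        exact (hd s ⟨by linarith [hs.1], by linarith [hs.2, ht.2]⟩).differentiableAt.differentiableWithinAt
      · intro s hs
        rw [interior_Icc] at hs
        rw [(hd s ⟨by linarith [hs.1], by linarith [hs.2, ht.2]⟩).deriv]
        exact h'' s ⟨hs.1, by linarith [hs.2, ht.2]⟩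
    have h2 := hmono (left_mem_Icc.2 h.le) (right_mem_Icc.2 h.le) h.le
    linarith [h0 ▸ h2]

lemma vFn_nonneg : ∀ t ∈ Ico (0:ℝ) 1, 0 ≤ 2*t - (1 - t^2) * LFn t := by
  apply nonneg_aux _ (fun t => 2*t*LFn t)
  · intro t ht
    have hp : (0:ℝ) < 1 + t := by linarith [ht.1]
    have hq : (0:ℝ) < 1 - t := by linarith [ht.2]
    have dL := hasDerivAt_LFn ht.1 ht.2
    have dq : HasDerivAt (fun t : ℝ => 1 - t^2) (-(2*t)) t := by
      simpa using (hasDerivAt_pow 2 t).const_sub 1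
    have d2t : HasDerivAt (fun t : ℝ => 2*t) 2 t := by
      simpa using (hasDerivAt_id t).const_mul (2:ℝ)
    have := d2t.sub (dq.mul dL)
    refine this.congr_deriv ?_
    field_simp
    ring
  · norm_num [LFn]
  · intro t ht
    have hL : 0 ≤ LFn t := by
      unfold LFn
      have := Real.log_nonneg (by linarith [ht.1] : (1:ℝ) ≤ 1 + t)
      have := Real.log_nonpos (by linarith [ht.2]) (by linarith [ht.1] : 1 - t ≤ 1)
      linarith
    have ht0 := ht.1
    nlinarith

lemma gFn_nonneg : ∀ t ∈ Ico (0:ℝ) 1, 0 ≤ t * LFn t - 2 * phiFn t := by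
  apply nonneg_aux _ (fun t => t * (1/(1+t) + 1/(1-t)) - LFn t)
  · intro t ht
    have dL := hasDerivAt_LFn ht.1 ht.2
    have dphi := hasDerivAt_phiFn ht.1 ht.2
    have := ((hasDerivAt_id t).mul dL).sub (dphi.const_mul 2)
    refine this.congr_deriv ?_
    simp only [id_eq]
    ring
  · simp [phiFn, LFn]
  · intro t ht
    have hp : (0:ℝ) < 1 + t := by linarith [ht.1]
    have hq : (0:ℝ) < 1 - t := by linarith [ht.2]
    have hv := vFn_nonneg t ⟨ht.1.le, ht.2⟩
    have h12 : ((1:ℝ) - t^2) ≠ 0 := by nlinarith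
    have heq : t * (1/(1+t) + 1/(1-t)) = 2*t/(1 - t^2) := by
      field_simp
      ring
    rw [heq, sub_nonneg, le_div_iff₀ (by nlinarith : (0:ℝ) < 1 - t^2)]
    nlinarith

lemma v2_nonneg : ∀ t ∈ Ico (0:ℝ) 1, 0 ≤ LFn t - 2*t := by
  apply nonneg_aux _ (fun t => (1/(1+t) + 1/(1-t)) - 2)
  · intro t ht
    have d2t : HasDerivAt (fun t : ℝ => 2*t) 2 t := by
      simpa using (hasDerivAt_id t).const_mul (2:ℝ)
    exact (hasDerivAt_LFn ht.1 ht.2).sub d2t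
  · simp [LFn]
  · intro t ht
    have hp : (0:ℝ) < 1 + t := by linarith [ht.1]
    have hq : (0:ℝ) < 1 - t := by linarith [ht.2]
    have h12 : ((1:ℝ) - t^2) ≠ 0 := by nlinarith
    have heq : 1/(1+t) + 1/(1-t) = 2/(1 - t^2) := by
      field_simp
      ring
    rw [heq, sub_nonneg, le_div_iff₀ (by nlinarith : (0:ℝ) < 1 - t^2)]
    nlinarith [ht.1]

lemma phiFn_one : phiFn 1 = 2 * Real.log 2 := by
  norm_num [phiFn]

lemma phi_ge : ∀ t ∈ Icc (0:ℝ) 1, t^2 ≤ phiFn t := by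
  intro t ht
  rcases eq_or_lt_of_le ht.2 with h1 | h1
  · rw [h1, phiFn_one]
    have := Real.log_two_gt_d9
    norm_num
    linarith
  · have hw : ∀ s ∈ Ico (0:ℝ) 1, 0 ≤ phiFn s - s^2 := by
      apply nonneg_aux _ (fun s => LFn s - 2*s)
      · intro s hs
        exact (hasDerivAt_phiFn hs.1 hs.2).sub (by simpa using (hasDerivAt_pow 2 s))
      · simp [phiFn]
      · intro s hs
        exact v2_nonneg s ⟨hs.1.le, hs.2⟩
    linarith [hw t ⟨ht.1, h1⟩]

lemma hFn_mono {a b : ℝ} (ha : 0 < a) (hab : a ≤ b) (hb1 : b ≤ 1) : hFn a ≤ hFn b := by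
  have hmono : MonotoneOn hFn (Icc a 1) := by
    apply monotoneOn_of_deriv_nonneg (convex_Icc a 1)
    · apply ContinuousOn.div phiFn_continuous.continuousOn (continuous_pow 2).continuousOn
      intro s hs
      have : (0:ℝ) < s := lt_of_lt_of_le ha hs.1
      positivity
    · intro s hs
      rw [interior_Icc] at hs
      have hs0 : 0 < s := lt_trans ha hs.1
      exact ((hasDerivAt_phiFn (by linarith) hs.2).div (hasDerivAt_pow 2 s)
        (by positivity)).differentiableAt.differentiableWithinAt
    · intro s hs
      rw [interior_Icc] at hs
      have hs0 : 0 < s := lt_trans ha hs.1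
      have hder : HasDerivAt hFn
          ((LFn s * s^2 - phiFn s * ((2:ℕ) * s^(2-1))) / (s^2)^2) s :=
        (hasDerivAt_phiFn (by linarith) hs.2).div (hasDerivAt_pow 2 s)
          (by positivity : s^2 ≠ 0)
      rw [hder.deriv]
      apply div_nonneg _ (by positivity)
      have hg := gFn_nonneg s ⟨hs0.le, hs.2⟩
      push_cast
      rw [pow_one]
      nlinarith [mul_nonneg hs0.le hg]
  exact hmono ⟨le_refl a, le_trans hab hb1⟩ ⟨hab, hb1⟩ hab

lemma hFn_one : hFn 1 = 2 * Real.log 2 := by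
  norm_num [hFn, phiFn_one]

lemma psiFn_eq {x : ℝ} (hx : x ≠ 0) : psiFn x = hFn (2*x) := by
  unfold psiFn hFn
  rw [if_neg hx, bernKL_eq, div_div]
  congr 1
  ring

lemma psiFn_zero : psiFn 0 = 1 := if_pos rfl

lemma phiFn_even (t : ℝ) : phiFn (-t) = phiFn t := by
  unfold phiFn
  rw [show (1:ℝ) + -t = 1 - t by ring, show (1:ℝ) - -t = 1 + t by ring]
  ring

lemma hFn_even (t : ℝ) : hFn (-t) = hFn t := by
  unfold hFn
  rw [phiFn_even, neg_pow]
  norm_num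

lemma psiFn_even (x : ℝ) : psiFn (-x) = psiFn x := by
  rcases eq_or_ne x 0 with h | h
  · rw [h]; norm_num
  · rw [psiFn_eq (neg_ne_zero.2 h), psiFn_eq h, show 2 * -x = -(2*x) by ring, hFn_even]

lemma psiFn_half : psiFn (1/2) = 2 * Real.log 2 := by
  rw [psiFn_eq (by norm_num : (1/2:ℝ) ≠ 0)]
  norm_num [hFn_one]

lemma psiFn_ge_one {x : ℝ} (hx0 : 0 ≤ x) (hx : x ≤ 1/2) : 1 ≤ psiFn x := by
  rcases eq_or_lt_of_le hx0 with h | h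
  · rw [← h, psiFn_zero]
  · rw [psiFn_eq h.ne']
    have hp := phi_ge (2*x) ⟨by linarith, by linarith⟩
    unfold hFn
    rw [le_div_iff₀ (by positivity)]
    linarith

lemma psiFn_monoOn : MonotoneOn psiFn (Icc (0:ℝ) (1/2)) := by
  intro a ha b hb hab
  rcases eq_or_lt_of_le ha.1 with h0 | h0
  · rw [← h0, psiFn_zero]
    exact psiFn_ge_one hb.1 hb.2
  · rw [psiFn_eq h0.ne', psiFn_eq (by linarith : b ≠ 0)]
    exact hFn_mono (by linarith) (by linarith) (by linarith [hb.2])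

lemma psiFn_abs (x : ℝ) : psiFn x = psiFn |x| := by
  rcases le_or_gt 0 x with h | h
  · rw [abs_of_nonneg h]
  · rw [abs_of_neg h, psiFn_even]

lemma psiFn_bounds : ∀ x ∈ Icc (-(1:ℝ)/2) (1/2), 1 ≤ psiFn x ∧ psiFn x ≤ 2 * Real.log 2 := by
  intro x hx
  have habs : |x| ≤ 1/2 := abs_le.2 ⟨by linarith [hx.1], hx.2⟩
  rw [psiFn_abs]
  constructor
  · exact psiFn_ge_one (abs_nonneg x) habs
  · rw [← psiFn_half]
    exact psiFn_monoOn ⟨abs_nonneg x, habs⟩ (by norm_num) habs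

/-- Properties of `ψ`: on `[−1/2, 1/2]` it satisfies `1 ≤ ψ(x) ≤ 2 ln 2`
(equivalently `2x² ≤ D(1/2 + x ‖ 1/2) ≤ 4 ln(2) x²`), it is even, decreasing
on `[−1/2, 0]`, increasing on `[0, 1/2]`, has minimum value `ψ(0) = 1` and
maximum value `ψ(1/2) = ψ(−1/2) = 2 ln 2`. -/
theorem psiFn_properties :
    (∀ x ∈ Set.Icc (-(1 : ℝ) / 2) (1 / 2), 1 ≤ psiFn x ∧ psiFn x ≤ 2 * Real.log 2) ∧
    (∀ x ∈ Set.Icc (-(1 : ℝ) / 2) (1 / 2),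
      2 * x ^ 2 ≤ bernKL (1 / 2 + x) (1 / 2) ∧
        bernKL (1 / 2 + x) (1 / 2) ≤ 4 * Real.log 2 * x ^ 2) ∧
    (∀ x ∈ Set.Icc (-(1 : ℝ) / 2) (1 / 2), psiFn (-x) = psiFn x) ∧
    AntitoneOn psiFn (Set.Icc (-(1 : ℝ) / 2) 0) ∧
    MonotoneOn psiFn (Set.Icc (0 : ℝ) (1 / 2)) ∧
    psiFn 0 = 1 ∧
    psiFn (1 / 2) = 2 * Real.log 2 ∧ psiFn (-(1 : ℝ) / 2) = 2 * Real.log 2 := by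
  refine ⟨psiFn_bounds, ?_, fun x _ => psiFn_even x, ?_, psiFn_monoOn, psiFn_zero, psiFn_half, ?_⟩
  · intro x hx
    rcases eq_or_ne x 0 with h | h
    · subst h
      norm_num [bernKL]
    · have hb := psiFn_bounds x hx
      rw [psiFn_eq h] at hb
      have hKL : bernKL (1/2 + x) (1/2) = hFn (2*x) * (2 * x^2) := by
        rw [bernKL_eq]
        unfold hFn
        field_simp
      rw [hKL]
      have hx2 : (0:ℝ) < 2 * x^2 := by positivity
      constructor
      · nlinarith [hb.1]
      · nlinarith [hb.2, Real.log_pos (by norm_num : (1:ℝ) < 2)]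
  · intro a ha b hb hab
    have h := psiFn_monoOn (a := -b) (b := -a)
      ⟨by linarith [hb.2], by linarith [ha.1]⟩
      ⟨by linarith [hb.2, hab], by linarith [ha.1]⟩ (by linarith)
    rwa [psiFn_even, psiFn_even] at h
  · rw [show (-(1:ℝ)/2) = -(1/2) by ring, psiFn_even, psiFn_half]
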